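/- arXiv:2107.06121 — 2 statements merged into one kernel-verified Lean document; each statement's English description precedes it below -/
import Mathlib

section
/- (Deletion step of Theorem 3.2) Let H = (V, E) be a hypergraph, let e ∈ E, and let S be a maximum-weight spanning forest of wg(H) satisfying Invariant (★); let d be the degree of the node e in S. Then there exists a maximum-weight spanning forest S' of wg((V, E \ {e})) satisfying Invariant (★) such that the symmetric difference of S and S' contains at most 2·d edges. -/
/-!
Lemma 3.1(a) (Bernstein–Goodman): a hypergraph `H` is acyclic iff the weight `w(H)`
equals the weight of a maximum-weight spanning forest of the weighted hyperedge
graph `wg(H)`.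

A hypergraph on a finite vertex type `V` is given by its finite set `E` of
hyperedges, each a `Finset V`.
-/

variable {V : Type*} [Fintype V] [DecidableEq V]

/-- The degree of a vertex `v`: the number of hyperedges containing `v`. -/
def hdeg (E : Finset (Finset V)) (v : V) : ℕ := (E.filter (fun e => v ∈ e)).card

/-- The weight of a hypergraph: the sum, over non-isolated vertices, of (degree − 1). -/
def hweight (E : Finset (Finset V)) : ℕ :=
  ∑ v ∈ Finset.univ.filter (fun v => 1 ≤ hdeg E v), (hdeg E v - 1)

/-- The weighted hyperedge graph `wg(H)`: nodes are the hyperedges, two distinct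
hyperedges are adjacent iff they intersect.  (The weight of an edge `(e, f)` is
`(e ∩ f).card`, see `fweight`.) -/
def wg (E : Finset (Finset V)) : SimpleGraph (Finset V) where
  Adj e f := e ∈ E ∧ f ∈ E ∧ e ≠ f ∧ (e ∩ f).Nonempty
  symm := ⟨fun e f ⟨he, hf, hne, hi⟩ => ⟨hf, he, hne.symm, by rwa [Finset.inter_comm] at hi⟩⟩
  loopless := ⟨fun e h => h.2.2.1 rfl⟩

/-- The weight `|e ∩ f|` of an (unordered) pair of hyperedges. -/
def interWt : Sym2 (Finset V) → ℕ :=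
  Sym2.lift ⟨fun a b => (a ∩ b).card, fun a b => by simp [Finset.inter_comm]⟩

/-- The weight of a forest (or any graph) on hyperedges: the sum over its edges
of the size of the intersection of the two endpoints. -/
noncomputable def fweight (F : SimpleGraph (Finset V)) : ℕ :=
  ∑ p ∈ (Set.toFinite F.edgeSet).toFinset, interWt p

/-- `S` is a spanning forest of `G`: an acyclic subgraph with the same connected
components (in particular it contains all nodes of `G`). -/
def IsSpanningForest (G S : SimpleGraph (Finset V)) : Prop :=
  S ≤ G ∧ S.IsAcyclic ∧ ∀ a b, S.Reachable a b ↔ G.Reachable a b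

/-- `S` is a maximum-weight spanning forest of `G`. -/
def IsMaxSpanningForest (G S : SimpleGraph (Finset V)) : Prop :=
  IsSpanningForest G S ∧ ∀ S', IsSpanningForest G S' → fweight S' ≤ fweight S

/-- A forest whose node set is the set of hyperedges of the hypergraph `E`. -/
def IsForestOn (E : Finset (Finset V)) (F : SimpleGraph (Finset V)) : Prop :=
  F.IsAcyclic ∧ ∀ e f, F.Adj e f → e ∈ E ∧ f ∈ E

/-- A join forest of the hypergraph `E`: a forest on the hyperedges such that any
two hyperedges sharing a vertex `v` are connected, and every node on the (unique)
path between them contains `v`. -/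
def IsJoinForest (E : Finset (Finset V)) (J : SimpleGraph (Finset V)) : Prop :=
  IsForestOn E J ∧
  ∀ e ∈ E, ∀ f ∈ E, ∀ v ∈ e, v ∈ f →
    J.Reachable e f ∧ ∀ p : J.Walk e f, p.IsPath → ∀ g ∈ p.support, v ∈ g

/-- A hypergraph is acyclic iff it has a join forest. -/
def IsAcyclicHypergraph (E : Finset (Finset V)) : Prop := ∃ J, IsJoinForest E J

/-- Invariant (★): for every hyperedge `e` and every nonempty `A ⊆ e`, the forest
`S` has at most two edges `(e, f)` with `e ∩ f = A`. -/
def InvariantStar (E : Finset (Finset V)) (S : SimpleGraph (Finset V)) : Prop :=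
  ∀ e ∈ E, ∀ A : Finset V, A.Nonempty → A ⊆ e →
    {f : Finset V | S.Adj e f ∧ e ∩ f = A}.ncard ≤ 2


open SimpleGraph

variable {W : Type*}

lemma DelStep.acyclic_mono {F G : SimpleGraph W} (h : F ≤ G) (hG : G.IsAcyclic) : F.IsAcyclic :=
  fun _ c hc => hG (c.mapLe h) ((Walk.mapLe_isCycle h).mpr hc)

lemma DelStep.edge_le {G : SimpleGraph W} {a b : W} (h : G.Adj a b) : edge a b ≤ G := by
  intro u v huv
  rw [edge_adj] at huv
  rcases huv.1 with ⟨rfl, rfl⟩ | ⟨rfl, rfl⟩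
  · exact h
  · exact h.symm

lemma DelStep.reachable_sup_edge {F : SimpleGraph W} {a b u v : W}
    (h : (F ⊔ edge a b).Reachable u v) :
    F.Reachable u v ∨ (F.Reachable u a ∧ F.Reachable b v) ∨
      (F.Reachable u b ∧ F.Reachable a v) := by
  obtain ⟨p⟩ := h
  induction p with
  | nil => exact Or.inl (Reachable.refl _)
  | @cons x y z h q ih =>
    rw [sup_adj] at h
    rcases h with h | h
    · rcases ih with h' | ⟨h1, h2⟩ | ⟨h1, h2⟩
      · exact Or.inl (h.reachable.trans h')
      · exact Or.inr (Or.inl ⟨h.reachable.trans h1, h2⟩)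
      · exact Or.inr (Or.inr ⟨h.reachable.trans h1, h2⟩)
    · rw [edge_adj] at h
      rcases h.1 with ⟨rfl, rfl⟩ | ⟨rfl, rfl⟩
      · rcases ih with h' | ⟨h1, h2⟩ | ⟨h1, h2⟩
        · exact Or.inr (Or.inl ⟨Reachable.refl _, h'⟩)
        · exact Or.inl (h1.symm.trans h2)
        · exact Or.inl h2
      · rcases ih with h' | ⟨h1, h2⟩ | ⟨h1, h2⟩
        · exact Or.inr (Or.inr ⟨Reachable.refl _, h'⟩)
        · exact Or.inl h2
        · exact Or.inr (Or.inr ⟨Reachable.refl _, h2⟩)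

lemma DelStep.reachable_sup_edge' {F : SimpleGraph W} {a b u v : W} (hab : a ≠ b)
    (h : F.Reachable u v ∨ (F.Reachable u a ∧ F.Reachable b v) ∨
      (F.Reachable u b ∧ F.Reachable a v)) :
    (F ⊔ edge a b).Reachable u v := by
  have hedge : (F ⊔ edge a b).Reachable a b :=
    (Adj.reachable (by rw [sup_adj, edge_adj]; exact Or.inr ⟨Or.inl ⟨rfl, rfl⟩, hab⟩))
  rcases h with h' | ⟨h1, h2⟩ | ⟨h1, h2⟩
  · exact h'.mono le_sup_left
  · exact ((h1.mono le_sup_left).trans hedge).trans (h2.mono le_sup_left)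
  · exact ((h1.mono le_sup_left).trans hedge.symm).trans (h2.mono le_sup_left)

lemma DelStep.eq_delE_sup_edge {F : SimpleGraph W} {a b : W} (h : F.Adj a b) :
    F = F.deleteEdges {s(a, b)} ⊔ edge a b := by
  ext u v
  simp only [sup_adj, deleteEdges_adj, Set.mem_singleton_iff, edge_adj]
  constructor
  · intro huv
    by_cases he : s(u, v) = s(a, b)
    · rw [Sym2.eq_iff] at he
      exact Or.inr ⟨he, huv.ne⟩
    · exact Or.inl ⟨huv, he⟩
  · rintro (⟨huv, _⟩ | ⟨(⟨rfl, rfl⟩ | ⟨rfl, rfl⟩), _⟩)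
    · exact huv
    · exact h
    · exact h.symm

lemma DelStep.not_reachable_delE {F : SimpleGraph W} (hF : F.IsAcyclic) {a b : W}
    (h : F.Adj a b) : ¬ (F.deleteEdges {s(a, b)}).Reachable a b :=
  ((isAcyclic_iff_forall_adj_isBridge.mp hF) h)

lemma DelStep.reachable_delE_cases {F : SimpleGraph W} {a b u v : W} (h : F.Adj a b)
    (huv : F.Reachable u v) :
    (F.deleteEdges {s(a, b)}).Reachable u v ∨
      ((F.deleteEdges {s(a, b)}).Reachable u a ∧ (F.deleteEdges {s(a, b)}).Reachable b v) ∨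
      ((F.deleteEdges {s(a, b)}).Reachable u b ∧ (F.deleteEdges {s(a, b)}).Reachable a v) := by
  rw [DelStep.eq_delE_sup_edge h] at huv
  exact DelStep.reachable_sup_edge huv

lemma DelStep.delE_sup_edge_comm {F : SimpleGraph W} {a b x y : W} (hne : s(x, y) ≠ s(a, b))
    (hab : a ≠ b) :
    (F ⊔ edge a b).deleteEdges {s(x, y)} = (F.deleteEdges {s(x, y)}) ⊔ edge a b := by
  ext u v
  simp only [deleteEdges_adj, sup_adj, Set.mem_singleton_iff, edge_adj]
  constructor
  · rintro ⟨h1 | h2, h3⟩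
    · exact Or.inl ⟨h1, h3⟩
    · exact Or.inr h2
  · rintro (⟨h1, h3⟩ | h2)
    · exact ⟨Or.inl h1, h3⟩
    · refine ⟨Or.inr h2, ?_⟩
      rcases h2.1 with ⟨rfl, rfl⟩ | ⟨rfl, rfl⟩
      · exact fun hh => hne hh.symm
      · exact fun hh => hne (Sym2.eq_swap.trans hh).symm

lemma DelStep.isAcyclic_sup_edge {F : SimpleGraph W} (hF : F.IsAcyclic) {a b : W} (hab : a ≠ b)
    (hr : ¬ F.Reachable a b) : (F ⊔ edge a b).IsAcyclic := by
  rw [isAcyclic_iff_forall_adj_isBridge]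
  intro x y hxy
  have hxy' := hxy
  rw [sup_adj] at hxy'
  rcases hxy' with h | h
  · show ¬ (((F ⊔ edge a b) \ fromEdgeSet {s(x, y)}).Reachable x y)
    have hne : s(x, y) ≠ s(a, b) := by
      intro hE
      rw [Sym2.eq_iff] at hE
      rcases hE with ⟨rfl, rfl⟩ | ⟨rfl, rfl⟩
      · exact hr h.reachable
      · exact hr h.symm.reachable
    intro hreach
    rw [show (F ⊔ edge a b) \ fromEdgeSet {s(x, y)} = (F ⊔ edge a b).deleteEdges {s(x, y)} from rfl,
      DelStep.delE_sup_edge_comm hne hab] at hreach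
    rcases DelStep.reachable_sup_edge hreach with h' | ⟨h1, h2⟩ | ⟨h1, h2⟩
    · exact DelStep.not_reachable_delE hF h h'
    · exact hr (((h1.mono (F.deleteEdges_le _)).symm.trans h.reachable).trans
        (h2.mono (F.deleteEdges_le _)).symm)
    · exact hr (((h2.mono (F.deleteEdges_le _)).trans h.symm.reachable).trans
        (h1.mono (F.deleteEdges_le _)))
  · -- edge a b case : {x,y} = {a,b}
    rw [edge_adj] at h
    show ¬ (((F ⊔ edge a b) \ fromEdgeSet {s(x, y)}).Reachable x y)
    have hFeq : (F ⊔ edge a b).deleteEdges {s(x, y)} = F := by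
      have hsxy : s(x, y) = s(a, b) := by
        rcases h.1 with ⟨rfl, rfl⟩ | ⟨rfl, rfl⟩
        · rfl
        · exact Sym2.eq_swap
      ext u v
      simp only [deleteEdges_adj, sup_adj, Set.mem_singleton_iff, edge_adj, hsxy]
      constructor
      · rintro ⟨h1 | h2, h3⟩
        · exact h1
        · exact absurd (by rcases h2.1 with ⟨rfl, rfl⟩ | ⟨rfl, rfl⟩ <;> simp [Sym2.eq_swap]) h3
      · intro h1
        refine ⟨Or.inl h1, fun hE => ?_⟩
        rw [Sym2.eq_iff] at hE
        rcases hE with ⟨rfl, rfl⟩ | ⟨rfl, rfl⟩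
        · exact hr h1.reachable
        · exact hr h1.symm.reachable
    intro hreach
    rw [show (F ⊔ edge a b) \ fromEdgeSet {s(x, y)} = (F ⊔ edge a b).deleteEdges {s(x, y)} from rfl,
      hFeq] at hreach
    rcases h.1 with ⟨rfl, rfl⟩ | ⟨rfl, rfl⟩
    · exact hr hreach
    · exact hr hreach.symm

lemma DelStep.swap_forest {F : SimpleGraph W} (hF : F.IsAcyclic) {x y u v : W}
    (hxy : F.Adj x y) (huv : u ≠ v)
    (hxu : (F.deleteEdges {s(x, y)}).Reachable x u)
    (hyv : (F.deleteEdges {s(x, y)}).Reachable y v) :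
    ((F.deleteEdges {s(x, y)}) ⊔ edge u v).IsAcyclic ∧
      (∀ p q, ((F.deleteEdges {s(x, y)}) ⊔ edge u v).Reachable p q ↔ F.Reachable p q) := by
  set F₀ := F.deleteEdges {s(x, y)} with hF₀
  have hF₀le : F₀ ≤ F := F.deleteEdges_le _
  have hF₀acy : F₀.IsAcyclic := DelStep.acyclic_mono hF₀le hF
  have hbridge : ¬ F₀.Reachable x y := DelStep.not_reachable_delE hF hxy
  have hruv : ¬ F₀.Reachable u v := fun h => hbridge ((hxu.trans h).trans hyv.symm)
  constructor
  · exact DelStep.isAcyclic_sup_edge hF₀acy huv hruv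
  · intro p q
    constructor
    · intro h
      rcases DelStep.reachable_sup_edge h with h' | ⟨h1, h2⟩ | ⟨h1, h2⟩
      · exact h'.mono hF₀le
      · exact ((h1.trans hxu.symm).mono hF₀le).trans
          (hxy.reachable.trans ((hyv.trans h2).mono hF₀le))
      · exact ((h1.trans hyv.symm).mono hF₀le).trans
          (hxy.symm.reachable.trans ((hxu.trans h2).mono hF₀le))
    · intro h
      rcases DelStep.reachable_delE_cases hxy h with h' | ⟨h1, h2⟩ | ⟨h1, h2⟩
      · exact DelStep.reachable_sup_edge' huv (Or.inl h')
      · exact DelStep.reachable_sup_edge' huv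
          (Or.inr (Or.inl ⟨h1.trans hxu, hyv.symm.trans h2⟩))
      · exact DelStep.reachable_sup_edge' huv
          (Or.inr (Or.inr ⟨h1.trans hyv, hxu.symm.trans h2⟩))

lemma DelStep.trail_cross {F : SimpleGraph W} (P : W → Prop) {a b : W} (p : F.Walk a b)
    (hp : p.IsTrail) (ha : P a) (hb : ¬ P b) :
    ∃ x y, s(x, y) ∈ p.edges ∧ P x ∧ ¬ P y ∧
      (F.deleteEdges {s(x, y)}).Reachable a x ∧ (F.deleteEdges {s(x, y)}).Reachable y b := by
  induction p with
  | nil => exact absurd ha hb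
  | @cons a' c b' h q ih =>
    by_cases hc : P c
    · obtain ⟨x, y, hmem, hPx, hPy, hcx, hyb⟩ := ih hp.of_cons hc hb
      have hnodup : s(a', c) ∉ q.edges := by
        have h2 := hp.edges_nodup
        rw [Walk.edges_cons] at h2
        exact (List.nodup_cons.mp h2).1
      have hne : s(a', c) ≠ s(x, y) := fun hE => hnodup (hE ▸ hmem)
      refine ⟨x, y, List.mem_cons_of_mem _ hmem, hPx, hPy, ?_, hyb⟩
      exact (Adj.reachable (by rw [deleteEdges_adj]; exact ⟨h, by simpa using hne⟩)).trans hcx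
    · refine ⟨a', c, List.mem_cons_self, ha, hc, Reachable.refl _, ?_⟩
      refine ⟨q.toDeleteEdges _ ?_⟩
      have hnodup : s(a', c) ∉ q.edges := by
        have h2 := hp.edges_nodup
        rw [Walk.edges_cons] at h2
        exact (List.nodup_cons.mp h2).1
      intro e' he'
      simp only [Set.mem_singleton_iff]
      intro hE
      exact hnodup (hE ▸ he')

lemma DelStep.trail_split {F : SimpleGraph W} {a b x y : W} {p : F.Walk a b} (hp : p.IsTrail)
    (hxy : s(x, y) ∈ p.edges) :
    ((F.deleteEdges {s(x, y)}).Reachable a x ∧ (F.deleteEdges {s(x, y)}).Reachable y b) ∨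
      ((F.deleteEdges {s(x, y)}).Reachable a y ∧ (F.deleteEdges {s(x, y)}).Reachable x b) := by
  induction p with
  | nil => simp at hxy
  | @cons a' c b' h q ih =>
    rw [Walk.edges_cons, List.mem_cons] at hxy
    have hnodup : s(a', c) ∉ q.edges := by
      have h2 := hp.edges_nodup
      rw [Walk.edges_cons] at h2
      exact (List.nodup_cons.mp h2).1
    rcases hxy with heq | hmem
    · have hq : (F.deleteEdges {s(x, y)}).Reachable c b' := by
        refine ⟨q.toDeleteEdges _ ?_⟩
        intro e' he'
        simp only [Set.mem_singleton_iff]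
        intro hE
        rw [hE, heq] at he'
        exact hnodup he'
      rcases Sym2.eq_iff.mp heq with ⟨rfl, rfl⟩ | ⟨rfl, rfl⟩
      · exact Or.inl ⟨Reachable.refl _, hq⟩
      · exact Or.inr ⟨Reachable.refl _, hq⟩
    · have hne : s(a', c) ≠ s(x, y) := fun hE => hnodup (hE ▸ hmem)
      have hstep : (F.deleteEdges {s(x, y)}).Reachable a' c :=
        Adj.reachable (by rw [deleteEdges_adj]; exact ⟨h, by simpa using hne⟩)
      rcases ih hp.of_cons hmem with ⟨h1, h2⟩ | ⟨h1, h2⟩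
      · exact Or.inl ⟨hstep.trans h1, h2⟩
      · exact Or.inr ⟨hstep.trans h1, h2⟩

lemma DelStep.ncard_swap {α : Type*} {s : Set α} (hs : s.Finite) {p q : α}
    (hp : p ∈ s) (hq : q ∉ s) : ((s \ {p}) ∪ {q}).ncard = s.ncard := by
  rw [Set.union_singleton, Set.ncard_insert_of_notMem (by simp [hq]) hs.diff,
    Set.ncard_diff_singleton_of_mem hp]
  have h1 : 0 < s.ncard := (Set.ncard_pos hs).mpr ⟨p, hp⟩
  omega

lemma DelStep.reachable_of_adj_imp {G F : SimpleGraph W}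
    (h : ∀ x y, G.Adj x y → F.Reachable x y) {a b : W} (hr : G.Reachable a b) :
    F.Reachable a b := by
  obtain ⟨p⟩ := hr
  induction p with
  | nil => exact Reachable.refl _
  | cons h' q ih => exact (h _ _ h').trans ih

lemma DelStep.edgeSet_sup_edge {F : SimpleGraph W} {a b : W} (hab : a ≠ b) :
    (F ⊔ edge a b).edgeSet = F.edgeSet ∪ {s(a, b)} := by
  rw [edgeSet_sup, edge_edgeSet_of_ne hab]

lemma DelStep.exists_spanning_forest [Finite W] (G : SimpleGraph W) :
    ∃ F, F ≤ G ∧ F.IsAcyclic ∧ ∀ a b, F.Reachable a b ↔ G.Reachable a b := by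
  obtain ⟨F, hF, hmax⟩ := Set.exists_max_image {F : SimpleGraph W | F ≤ G ∧ F.IsAcyclic}
    (fun F => F.edgeSet.ncard) (Set.toFinite _) ⟨⊥, bot_le, isAcyclic_bot⟩
  refine ⟨F, hF.1, hF.2, fun a b => ⟨fun h => h.mono hF.1, fun h => ?_⟩⟩
  refine DelStep.reachable_of_adj_imp (fun x y hxy => ?_) h
  by_contra hr
  have hne : x ≠ y := hxy.ne
  have hnadj : ¬ F.Adj x y := fun hadj => hr hadj.reachable
  have hle : F ⊔ edge x y ≤ G := sup_le hF.1 (DelStep.edge_le hxy)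
  have hacy : (F ⊔ edge x y).IsAcyclic := DelStep.isAcyclic_sup_edge hF.2 hne hr
  have hcard : (F ⊔ edge x y).edgeSet.ncard = F.edgeSet.ncard + 1 := by
    rw [DelStep.edgeSet_sup_edge hne, Set.union_singleton,
      Set.ncard_insert_of_notMem (by simpa using hnadj) (Set.toFinite _)]
  have := hmax _ ⟨hle, hacy⟩
  omega

lemma DelStep.forest_card_le [Finite W] [DecidableEq W] {F₁ : SimpleGraph W} (h₁ : F₁.IsAcyclic) :
    ∀ n (F₂ : SimpleGraph W), F₂.IsAcyclic →
      (∀ a b, F₁.Adj a b → F₂.Reachable a b) →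
      (F₁.edgeSet \ F₂.edgeSet).ncard = n →
      F₁.edgeSet.ncard ≤ F₂.edgeSet.ncard := by
  intro n
  induction n using Nat.strong_induction_on with
  | _ n ih =>
    intro F₂ h₂ hadj hn
    rcases Nat.eq_zero_or_pos n with rfl | hpos
    · have hsub : F₁.edgeSet ⊆ F₂.edgeSet := by
        rw [← Set.diff_eq_empty]
        exact (Set.ncard_eq_zero (Set.toFinite _)).mp hn
      exact Set.ncard_le_ncard hsub (Set.toFinite _)
    · have hne : (F₁.edgeSet \ F₂.edgeSet).Nonempty := by
        rw [← Set.ncard_pos (Set.toFinite _)]; omega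
      obtain ⟨f, hf⟩ := hne
      obtain ⟨⟨a, b⟩, rfl⟩ := f.exists_rep
      have hfab : Quot.mk (Sym2.Rel W) (a, b) = s(a, b) := rfl
      rw [hfab] at hf
      have hadj₁ : F₁.Adj a b := hf.1
      have hnF₂ : s(a, b) ∉ F₂.edgeSet := hf.2
      have hab : a ≠ b := hadj₁.ne
      obtain ⟨p0⟩ := hadj₁ |> hadj a b
      set p := p0.bypass with hpdef
      have hppath : p.IsPath := p0.bypass_isPath
      -- there is an edge of p not in F₁
      have hex : ∃ x y, s(x, y) ∈ p.edges ∧ s(x, y) ∉ F₁.edgeSet := by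
        by_contra hcon
        push_neg at hcon
        have hall : ∀ e' ∈ p.edges, e' ∈ F₁.edgeSet := by
          intro e' he'
          obtain ⟨⟨x, y⟩, rfl⟩ := e'.exists_rep
          exact hcon x y he'
        have hq : F₁.Walk a b := p.transfer F₁ hall
        have hqpath : (p.transfer F₁ hall).IsPath := hppath.transfer hall
        have hcyc : (Walk.cons hadj₁.symm (p.transfer F₁ hall)).IsCycle := by
          rw [Walk.cons_isCycle_iff]
          refine ⟨hqpath, ?_⟩
          rw [Walk.edges_transfer]
          intro hmem
          have := p.edges_subset_edgeSet hmem
          rw [Sym2.eq_swap] at this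
          exact hnF₂ this
        exact h₁ _ hcyc
      obtain ⟨x, y, hmem, hxyF₁⟩ := hex
      have hxyF₂ : F₂.Adj x y := p.adj_of_mem_edges hmem
      -- split sides
      have hsplit := DelStep.trail_split hppath.isTrail hmem
      -- construct the swapped forest in both symmetric cases
      have key : ∀ x' y' : W, F₂.Adj x' y' → s(x', y') ∉ F₁.edgeSet →
          (F₂.deleteEdges {s(x', y')}).Reachable x' a →
          (F₂.deleteEdges {s(x', y')}).Reachable y' b →
          F₁.edgeSet.ncard ≤ F₂.edgeSet.ncard := by
        intro x' y' hxy' hnF₁ hra hrb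
        set F₂' := (F₂.deleteEdges {s(x', y')}) ⊔ edge a b with hF₂'
        obtain ⟨hacy', hreach'⟩ := DelStep.swap_forest h₂ hxy' hab hra hrb
        have hE' : F₂'.edgeSet = (F₂.edgeSet \ {s(x', y')}) ∪ {s(a, b)} := by
          rw [hF₂', DelStep.edgeSet_sup_edge hab, edgeSet_deleteEdges]
        have hadj' : ∀ u v, F₁.Adj u v → F₂'.Reachable u v := by
          intro u v huv
          rw [hreach']
          exact hadj u v huv
        have hcard' : F₂'.edgeSet.ncard = F₂.edgeSet.ncard := by
          rw [hE']
          exact DelStep.ncard_swap (Set.toFinite _) (F₂.mem_edgeSet.mpr hxy') hnF₂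
        have hdiff : F₁.edgeSet \ F₂'.edgeSet = (F₁.edgeSet \ F₂.edgeSet) \ {s(a, b)} := by
          rw [hE']
          ext r
          simp only [Set.mem_diff, Set.mem_union, Set.mem_singleton_iff, not_or]
          constructor
          · rintro ⟨hr1, hr2, hr3⟩
            exact ⟨⟨hr1, fun hrF₂ => hr2 ⟨hrF₂, fun hrE => hnF₁ (hrE ▸ hr1)⟩⟩, hr3⟩
          · rintro ⟨⟨hr1, hr2⟩, hr3⟩
            exact ⟨hr1, fun hc => hr2 hc.1, hr3⟩
        have hmeas : (F₁.edgeSet \ F₂'.edgeSet).ncard = n - 1 := by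
          rw [hdiff, Set.ncard_diff_singleton_of_mem ((Set.mem_diff _).mpr ⟨F₁.mem_edgeSet.mpr hadj₁, hnF₂⟩), hn]
        have := ih (n - 1) (by omega) F₂' hacy' hadj' hmeas
        omega
      rcases hsplit with ⟨h1, h2⟩ | ⟨h1, h2⟩
      · exact key x y hxyF₂ hxyF₁ h1.symm h2
      · refine key y x hxyF₂.symm (by rwa [Sym2.eq_swap]) ?_ ?_
        · rw [Sym2.eq_swap]; exact h1.symm
        · rw [Sym2.eq_swap]; exact h2

lemma DelStep.walk_isPath_loop_eq_nil {H : SimpleGraph W} {g : W} (p : H.Walk g g)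
    (hp : p.IsPath) : p = Walk.nil := by
  cases p with
  | nil => rfl
  | cons h q =>
    exfalso
    rw [Walk.cons_isPath_iff] at hp
    exact hp.2 q.end_mem_support

lemma DelStep.exists_leaf [Fintype W] [DecidableEq W] {H : SimpleGraph W} (hH : H.IsAcyclic)
    {g f1 : W} (hadj : H.Adj g f1) :
    ∃ x, H.Reachable g x ∧ x ≠ g ∧ {f | H.Adj x f}.ncard ≤ 1 := by
  set L : Set ℕ := {n | ∃ (x : W) (p : H.Walk g x), p.IsPath ∧ p.length = n} with hL
  have hLfin : L.Finite := by
    apply Set.Finite.subset (Set.finite_Iio (Fintype.card W))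
    rintro n ⟨x, p, hp, rfl⟩
    exact hp.length_lt
  have h1L : 1 ∈ L :=
    ⟨f1, Walk.cons hadj Walk.nil, by simp [Walk.cons_isPath_iff, hadj.ne], rfl⟩
  obtain ⟨n, hnL, hnmax⟩ := Set.exists_max_image L id hLfin ⟨1, h1L⟩
  obtain ⟨x, p, hp, hlen⟩ := hnL
  have hn1 : 1 ≤ n := hnmax 1 h1L
  have hxg : x ≠ g := by
    rintro rfl
    rw [DelStep.walk_isPath_loop_eq_nil p hp] at hlen
    simp at hlen
    omega
  have hkey : ∀ z, H.Adj x z → p.edges.getLast? = some s(z, x) := by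
    intro z hz
    have hzsup : z ∈ p.support := by
      by_contra hns
      have hq : (p.concat hz).IsPath := by
        rw [← Walk.isPath_reverse_iff, Walk.reverse_concat, Walk.cons_isPath_iff]
        exact ⟨(Walk.isPath_reverse_iff _).mpr hp, by simpa [Walk.support_reverse] using hns⟩
      have hmem : (p.concat hz).length ∈ L := ⟨z, p.concat hz, hq, rfl⟩
      have hle := hnmax _ hmem
      rw [Walk.length_concat, hlen] at hle
      simp only [id] at hle
      omega
    have hzx : z ≠ x := hz.ne'
    have hxnot : x ∉ (p.takeUntil z hzsup).support := by
      intro hxt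
      have hspec := p.take_spec hzsup
      have hnodup := hp.support_nodup
      rw [← hspec, Walk.support_append] at hnodup
      have hxdrop : x ∈ (p.dropUntil z hzsup).support.tail :=
        Walk.end_mem_tail_support_of_ne hzx _
      exact (List.disjoint_of_nodup_append hnodup) hxt hxdrop
    have hq2 : ((p.takeUntil z hzsup).concat hz.symm).IsPath := by
      rw [← Walk.isPath_reverse_iff, Walk.reverse_concat, Walk.cons_isPath_iff]
      exact ⟨(Walk.isPath_reverse_iff _).mpr (hp.takeUntil hzsup),
        by simpa [Walk.support_reverse] using hxnot⟩
    have hpeq : p = (p.takeUntil z hzsup).concat hz.symm :=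
      congrArg Subtype.val (hH.path_unique ⟨p, hp⟩ ⟨_, hq2⟩)
    rw [hpeq, Walk.edges_concat, List.concat_eq_append, List.getLast?_concat]
  refine ⟨x, ⟨p⟩, hxg, ?_⟩
  by_cases hne : {f | H.Adj x f}.Nonempty
  · obtain ⟨z1, hz1⟩ := hne
    have hsub : {f | H.Adj x f} ⊆ {z1} := by
      intro f hf
      have h1 := hkey z1 hz1
      have h2 := hkey f hf
      rw [h1] at h2
      have h3 : s(f, x) = s(z1, x) := (Option.some.inj h2).symm
      rcases Sym2.eq_iff.mp h3 with ⟨rfl, _⟩ | ⟨rfl, rfl⟩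
      · rfl
      · exact absurd rfl hz1.ne'
    calc {f | H.Adj x f}.ncard ≤ ({z1} : Set W).ncard :=
          Set.ncard_le_ncard hsub (Set.finite_singleton _)
      _ = 1 := Set.ncard_singleton _
  · rw [Set.not_nonempty_iff_eq_empty] at hne
    rw [hne]
    simp

open SimpleGraph in
lemma DelStep.fweight_swap {V : Type*} [Fintype V] [DecidableEq V]
    {F F' : SimpleGraph (Finset V)} {p q : Sym2 (Finset V)}
    (hp : p ∈ F.edgeSet) (hq : q ∉ F.edgeSet)
    (hE : F'.edgeSet = (F.edgeSet \ {p}) ∪ {q}) :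
    fweight F' + interWt p = fweight F + interWt q := by
  have hA : (Set.toFinite F'.edgeSet).toFinset
      = insert q ((Set.toFinite F.edgeSet).toFinset.erase p) := by
    ext r
    simp only [Set.Finite.mem_toFinset, hE, Set.mem_union, Set.mem_diff, Set.mem_singleton_iff,
      Finset.mem_insert, Finset.mem_erase]
    tauto
  have hq' : q ∉ (Set.toFinite F.edgeSet).toFinset.erase p := by
    simp [Set.Finite.mem_toFinset, hq]
  have hsum : ∑ r ∈ (Set.toFinite F.edgeSet).toFinset.erase p, interWt r + interWt p
      = fweight F :=
    Finset.sum_erase_add _ _ (by simpa [Set.Finite.mem_toFinset] using hp)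
  unfold fweight
  rw [hA, Finset.sum_insert hq']
  unfold fweight at hsum
  omega

/-- **Deletion step of Theorem 3.2**: after deleting a hyperedge `e` whose degree
in the maintained maximum-weight spanning forest `S` is `d`, there is a
maximum-weight spanning forest of the new hypergraph satisfying Invariant (★)
that differs from `S` by at most `2 * d` edges. -/
theorem deletion_step (E : Finset (Finset V)) (e : Finset V) (he : e ∈ E)
    (S : SimpleGraph (Finset V)) (hS : IsMaxSpanningForest (wg E) S)
    (hstar : InvariantStar E S)
    (d : ℕ) (hd : d = {f : Finset V | S.Adj e f}.ncard) :
    ∃ S', IsMaxSpanningForest (wg (E.erase e)) S' ∧ InvariantStar (E.erase e) S' ∧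
      ((S.edgeSet \ S'.edgeSet) ∪ (S'.edgeSet \ S.edgeSet)).ncard ≤ 2 * d := by
  classical
  open SimpleGraph in
  obtain ⟨⟨hSle, hSacy, hSreach⟩, hSmax⟩ := hS
  set E' := E.erase e with hE'def
  set G : SimpleGraph (Finset V) := wg E with hGdef
  set G' : SimpleGraph (Finset V) := wg E' with hG'def
  have hG'adj : ∀ u v, G'.Adj u v ↔ (u ∈ E' ∧ v ∈ E' ∧ u ≠ v ∧ (u ∩ v).Nonempty) := fun u v => Iff.rfl
  have hGadj : ∀ u v, G.Adj u v ↔ (u ∈ E ∧ v ∈ E ∧ u ≠ v ∧ (u ∩ v).Nonempty) := fun u v => Iff.rfl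
  have hG'le : G' ≤ G := by
    intro u v huv
    rw [hG'adj] at huv
    exact (hGadj u v).mpr ⟨E.erase_subset e huv.1, E.erase_subset e huv.2.1, huv.2.2⟩
  -- the forest S with all edges at e removed
  set S₀ : SimpleGraph (Finset V) := S.deleteEdges {p : Sym2 (Finset V) | e ∈ p} with hS₀def
  have hS₀adj : ∀ u v, S₀.Adj u v ↔ S.Adj u v ∧ u ≠ e ∧ v ≠ e := by
    intro u v
    rw [hS₀def, deleteEdges_adj]
    constructor
    · rintro ⟨h1, h2⟩
      simp only [Set.mem_setOf_eq, Sym2.mem_iff] at h2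
      push_neg at h2
      exact ⟨h1, fun h => h2.1 h.symm, fun h => h2.2 h.symm⟩
    · rintro ⟨h1, h2, h3⟩
      refine ⟨h1, ?_⟩
      simp only [Set.mem_setOf_eq, Sym2.mem_iff]
      push_neg
      exact ⟨fun h => h2 h.symm, fun h => h3 h.symm⟩
  have hS₀le : S₀ ≤ S := S.deleteEdges_le _
  have hS₀G' : S₀ ≤ G' := by
    intro u v huv
    rw [hS₀adj] at huv
    have hG := hSle huv.1
    rw [hGadj] at hG
    exact (hG'adj u v).mpr ⟨Finset.mem_erase.mpr ⟨huv.2.1, hG.1⟩,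
      Finset.mem_erase.mpr ⟨huv.2.2, hG.2.1⟩, hG.2.2⟩
  have hS₀acy : S₀.IsAcyclic := DelStep.acyclic_mono hS₀le hSacy
  -- the deleted edges
  have hδd : (S.incidenceSet e).ncard = d := by
    rw [hd]
    have h1 : {f | S.Adj e f} = S.neighborSet e := rfl
    rw [h1, ← Nat.card_coe_set_eq, ← Nat.card_coe_set_eq]
    exact Nat.card_congr (S.incidenceSetEquivNeighborSet e)
  have hδsub : S.incidenceSet e ⊆ S.edgeSet := S.incidenceSet_subset e
  have hS₀E : S₀.edgeSet = S.edgeSet \ S.incidenceSet e := by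
    rw [hS₀def, edgeSet_deleteEdges]
    ext r
    simp only [Set.mem_diff, Set.mem_setOf_eq, incidenceSet]
    tauto
  have hS₀card : S₀.edgeSet.ncard = S.edgeSet.ncard - d := by
    rw [hS₀E, Set.ncard_diff hδsub (Set.toFinite _), hδd]
  have hdle : d ≤ S.edgeSet.ncard := by
    rw [← hδd]; exact Set.ncard_le_ncard hδsub (Set.toFinite _)
  -- edges of S₀ are never incident to e, edges of any subgraph of G' neither
  have hG'noe : ∀ (T : SimpleGraph (Finset V)), T ≤ G' → ∀ r ∈ T.edgeSet, e ∉ r := by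
    intro T hT r hr hmem
    obtain ⟨⟨u, v⟩, rfl⟩ := r.exists_rep
    have hadj : T.Adj u v := hr
    have h1 := hT hadj
    rw [hG'adj] at h1
    rw [show Quot.mk (Sym2.Rel (Finset V)) (u, v) = s(u, v) from rfl, Sym2.mem_iff] at hmem
    rcases hmem with rfl | rfl
    · exact (Finset.mem_erase.mp h1.1).1 rfl
    · exact (Finset.mem_erase.mp h1.2.1).1 rfl
  -- existence of a maximum spanning forest of G'
  have hmsf : ∃ T, IsMaxSpanningForest G' T := by
    obtain ⟨F0, h1, h2, h3⟩ := DelStep.exists_spanning_forest G'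
    obtain ⟨T, hT, hTmax⟩ := Set.exists_max_image {T : SimpleGraph (Finset V) | IsSpanningForest G' T}
      fweight (Set.toFinite _) ⟨F0, h1, h2, h3⟩
    exact ⟨T, hT, fun S' h => hTmax S' h⟩
  -- Phase A : an MSF not containing S₀ can be improved
  have hA : ∀ T, IsMaxSpanningForest G' T → ¬ (S₀.edgeSet ⊆ T.edgeSet) →
      ∃ T', IsMaxSpanningForest G' T' ∧ S₀.edgeSet \ T'.edgeSet ⊂ S₀.edgeSet \ T.edgeSet := by
    intro T hT hnc
    obtain ⟨⟨hTle, hTacy, hTreach⟩, hTmax⟩ := hT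
    rw [Set.not_subset] at hnc
    obtain ⟨f, hfS₀, hfT⟩ := hnc
    obtain ⟨⟨a, b⟩, rfl⟩ := f.exists_rep
    rw [show Quot.mk (Sym2.Rel (Finset V)) (a, b) = s(a, b) from rfl] at hfS₀ hfT
    have hS₀ab : S₀.Adj a b := hfS₀
    have hSab : S.Adj a b := hS₀le hS₀ab
    have hab : a ≠ b := hSab.ne
    have hG'ab : G'.Adj a b := hS₀G' hS₀ab
    have hTrab : T.Reachable a b := (hTreach a b).mpr hG'ab.reachable
    obtain ⟨p0⟩ := hTrab
    set p := p0.bypass with hpdef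
    have hpp : p.IsPath := p0.bypass_isPath
    set S₁ : SimpleGraph (Finset V) := S.deleteEdges {s(a, b)} with hS₁def
    have hPa : S₁.Reachable a a := Reachable.refl _
    have hPb : ¬ S₁.Reachable a b := DelStep.not_reachable_delE hSacy hSab
    obtain ⟨x, y, hmem, hPx, hPy, hTax, hTyb⟩ :=
      DelStep.trail_cross (fun v => S₁.Reachable a v) p hpp.isTrail hPa hPb
    have hTxy : T.Adj x y := p.adj_of_mem_edges hmem
    have hxyT : s(x, y) ∈ T.edgeSet := T.mem_edgeSet.mpr hTxy
    have hG'xy : G'.Adj x y := hTle hTxy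
    have hGxy : G.Adj x y := hG'le hG'xy
    -- the crossing edge is not an edge of S
    have hxyS : ¬ S.Adj x y := by
      intro hadj
      have hne : s(x, y) ≠ s(a, b) := fun hE => hfT (hE ▸ hxyT)
      have hS₁xy : S₁.Adj x y := by
        rw [hS₁def, deleteEdges_adj]
        exact ⟨hadj, by simpa using hne⟩
      exact hPy (hPx.trans hS₁xy.reachable)
    have hxySE : s(x, y) ∉ S.edgeSet := fun hc => hxyS hc
    -- y lies on the b-side of S − ab
    have hSyb : S₁.Reachable b y := by
      have hTay : T.Reachable a y := Reachable.trans ⟨p⟩ ((hTyb.mono (T.deleteEdges_le _)).symm)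
      have hSay : S.Reachable a y :=
        (hSreach a y).mpr (((hTreach a y).mp hTay).mono hG'le)
      rcases DelStep.reachable_delE_cases hSab hSay with h' | ⟨h1, h2⟩ | ⟨h1, h2⟩
      · exact absurd h' hPy
      · exact h2
      · exact absurd h1 hPb
    -- swap in S : spanning forest of G with weight difference
    obtain ⟨hS''acy, hS''reach⟩ := DelStep.swap_forest hSacy hSab hGxy.ne hPx hSyb
    set S'' : SimpleGraph (Finset V) := S₁ ⊔ SimpleGraph.edge x y with hS''def
    have hS''le : S'' ≤ G := sup_le ((S.deleteEdges_le _).trans hSle) (DelStep.edge_le hGxy)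
    have hS''sf : IsSpanningForest G S'' :=
      ⟨hS''le, hS''acy, fun u v => (hS''reach u v).trans (hSreach u v)⟩
    have hwS'' := hSmax S'' hS''sf
    have hfwS : fweight S'' + interWt s(a, b) = fweight S + interWt s(x, y) := by
      refine DelStep.fweight_swap (S.mem_edgeSet.mpr hSab) hxySE ?_
      rw [hS''def, DelStep.edgeSet_sup_edge hGxy.ne, hS₁def, edgeSet_deleteEdges]
    have hwt : interWt s(x, y) ≤ interWt s(a, b) := by omega
    -- swap in T : another MSF of G'
    obtain ⟨hT'acy, hT'reach⟩ := DelStep.swap_forest hTacy hTxy hab hTax.symm hTyb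
    set T' : SimpleGraph (Finset V) := (T.deleteEdges {s(x, y)}) ⊔ SimpleGraph.edge a b
      with hT'def
    have hT'le : T' ≤ G' := sup_le ((T.deleteEdges_le _).trans hTle) (DelStep.edge_le hG'ab)
    have hT'sf : IsSpanningForest G' T' :=
      ⟨hT'le, hT'acy, fun u v => (hT'reach u v).trans (hTreach u v)⟩
    have hT'E : T'.edgeSet = (T.edgeSet \ {s(x, y)}) ∪ {s(a, b)} := by
      rw [hT'def, DelStep.edgeSet_sup_edge hab, edgeSet_deleteEdges]
    have hfwT : fweight T' + interWt s(x, y) = fweight T + interWt s(a, b) :=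
      DelStep.fweight_swap hxyT hfT hT'E
    have hT'w : fweight T ≤ fweight T' := by omega
    have hT'max : IsMaxSpanningForest G' T' :=
      ⟨hT'sf, fun S' h => (hTmax S' h).trans hT'w⟩
    refine ⟨T', hT'max, ?_⟩
    have hdiff : S₀.edgeSet \ T'.edgeSet = (S₀.edgeSet \ T.edgeSet) \ {s(a, b)} := by
      rw [hT'E]
      ext r
      simp only [Set.mem_diff, Set.mem_union, Set.mem_singleton_iff, not_or]
      constructor
      · rintro ⟨hr1, hr2, hr3⟩
        refine ⟨⟨hr1, fun hrT => hr2 ⟨hrT, fun hrE => ?_⟩⟩, hr3⟩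
        rw [hrE] at hr1
        exact hxySE ((hS₀E ▸ hr1 : _ ∈ S.edgeSet \ _)).1
      · rintro ⟨⟨hr1, hr2⟩, hr3⟩
        exact ⟨hr1, fun hc => hr2 hc.1, hr3⟩
    rw [hdiff]
    exact Set.sdiff_singleton_ssubset.mpr ⟨hfS₀, hfT⟩
  -- Phase A conclusion : there is an MSF containing S₀
  obtain ⟨T₁, hT₁, hT₁min⟩ := Set.exists_min_image
    {T : SimpleGraph (Finset V) | IsMaxSpanningForest G' T}
    (fun T => (S₀.edgeSet \ T.edgeSet).ncard) (Set.toFinite _) hmsf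
  have hT₁cont : S₀.edgeSet ⊆ T₁.edgeSet := by
    by_contra hnc
    obtain ⟨T', hT'msf, hss⟩ := hA T₁ hT₁ hnc
    have h1 := hT₁min T' hT'msf
    have h2 := Set.ncard_lt_ncard hss (Set.toFinite _)
    omega
  -- Phase B : among MSFs containing S₀, choose one minimizing the star potential
  set Ψ : SimpleGraph (Finset V) → ℕ :=
    fun T => ∑ g ∈ E', ∑ A ∈ g.powerset, Nat.choose ({f | T.Adj g f ∧ g ∩ f = A}.ncard) 2
    with hΨdef
  obtain ⟨T, hTmem, hTmin⟩ := Set.exists_min_image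
    {T : SimpleGraph (Finset V) | IsMaxSpanningForest G' T ∧ S₀.edgeSet ⊆ T.edgeSet}
    Ψ (Set.toFinite _) ⟨T₁, hT₁, hT₁cont⟩
  obtain ⟨hTmsf, hTcont⟩ := hTmem
  obtain ⟨⟨hTle, hTacy, hTreach⟩, hTmax⟩ := hTmsf
  -- Phase B main claim : T satisfies the invariant
  have hstar' : InvariantStar E' T := by
    intro g hgE' A hAne hAg
    by_contra hviol
    push_neg at hviol
    have hgE : g ∈ E := E.erase_subset e hgE'
    have hSsetle := hstar g hgE A hAne hAg
    -- pick f3 ∈ N which is not an S-edge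
    have hf3ex : ∃ f3, (T.Adj g f3 ∧ g ∩ f3 = A) ∧ ¬ S.Adj g f3 := by
      by_contra hcon
      push_neg at hcon
      have hsub : {f | T.Adj g f ∧ g ∩ f = A} ⊆ {f | S.Adj g f ∧ g ∩ f = A} :=
        fun f hf => ⟨hcon f hf, hf.2⟩
      have := Set.ncard_le_ncard hsub (Set.toFinite _)
      omega
    obtain ⟨f3, ⟨hTgf3, hgf3A⟩, hf3S⟩ := hf3ex
    have hgf3ne : g ≠ f3 := hTgf3.ne
    have hf3mem : f3 ∈ {f | T.Adj g f ∧ g ∩ f = A} := ⟨hTgf3, hgf3A⟩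
    -- pick f1 ∈ N different from f3
    have hf1ex : ∃ f1, (T.Adj g f1 ∧ g ∩ f1 = A) ∧ f1 ≠ f3 := by
      by_contra hcon
      push_neg at hcon
      have hsub : {f | T.Adj g f ∧ g ∩ f = A} ⊆ {f3} := fun f hf => hcon f hf
      have := Set.ncard_le_ncard hsub (Set.finite_singleton _)
      rw [Set.ncard_singleton] at this
      omega
    obtain ⟨f1, ⟨hTgf1, hgf1A⟩, hf13⟩ := hf1ex
    -- the graph of A-edges of T
    set FA : SimpleGraph (Finset V) :=
      { Adj := fun u v => T.Adj u v ∧ u ∩ v = A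
        symm := ⟨fun u v h => ⟨h.1.symm, by rw [Finset.inter_comm]; exact h.2⟩⟩
        loopless := ⟨fun u h => T.loopless.irrefl u h.1⟩ } with hFAdef
    have hFAadj : ∀ u v, FA.Adj u v ↔ T.Adj u v ∧ u ∩ v = A := fun u v => Iff.rfl
    have hFAle : FA ≤ T := fun u v h => h.1
    have hFAacy : FA.IsAcyclic := DelStep.acyclic_mono hFAle hTacy
    have hFAgf3 : FA.Adj g f3 := ⟨hTgf3, hgf3A⟩
    set FS : SimpleGraph (Finset V) := FA.deleteEdges {s(g, f3)} with hFSdef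
    have hFSgf1 : FS.Adj g f1 := by
      rw [hFSdef, deleteEdges_adj]
      refine ⟨⟨hTgf1, hgf1A⟩, ?_⟩
      simp only [Set.mem_singleton_iff, Sym2.eq_iff]
      rintro (⟨-, h⟩ | ⟨rfl, rfl⟩)
      · exact hf13 h
      · exact hgf3ne rfl
    obtain ⟨x, hgx, hxg, hxdeg⟩ :=
      DelStep.exists_leaf (DelStep.acyclic_mono (FA.deleteEdges_le _) hFAacy) hFSgf1
    have hFAbridge : ¬ FS.Reachable g f3 := DelStep.not_reachable_delE hFAacy hFAgf3
    have hxf3 : x ≠ f3 := by rintro rfl; exact hFAbridge hgx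
    -- x has an FS-neighbour, hence A ⊆ x and x ∈ E'
    have hxnb : ∃ c, FS.Adj x c := by
      obtain ⟨w⟩ := hgx.symm
      cases w with
      | nil => exact absurd rfl hxg
      | cons h q => exact ⟨_, h⟩
    obtain ⟨c, hxc⟩ := hxnb
    have hFAxc : FA.Adj x c := (FA.deleteEdges_le _) hxc
    have hAx : A ⊆ x := by rw [← hFAxc.2]; exact Finset.inter_subset_left
    have hAf3 : A ⊆ f3 := by rw [← hgf3A]; exact Finset.inter_subset_right
    have hxE' : x ∈ E' := ((hG'adj x c).mp (hTle hFAxc.1)).1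
    have hf3E' : f3 ∈ E' := ((hG'adj g f3).mp (hTle hTgf3)).2.1
    have hgE'mem : g ∈ E' := hgE'
    have hAxf3 : A ⊆ x ∩ f3 := Finset.subset_inter hAx hAf3
    have hG'xf3 : G'.Adj x f3 := (hG'adj x f3).mpr ⟨hxE', hf3E', hxf3, hAne.mono hAxf3⟩
    -- reachability facts in T minus the edge (g, f3)
    have hFSle : FS ≤ T.deleteEdges {s(g, f3)} := by
      intro u v huv
      rw [hFSdef, deleteEdges_adj] at huv
      rw [deleteEdges_adj]
      exact ⟨huv.1.1, huv.2⟩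
    have hTdgx : (T.deleteEdges {s(g, f3)}).Reachable g x := hgx.mono hFSle
    have hTdbridge : ¬ (T.deleteEdges {s(g, f3)}).Reachable g f3 :=
      DelStep.not_reachable_delE hTacy hTgf3
    have hnTxf3 : ¬ T.Adj x f3 := by
      intro hadj
      apply hTdbridge
      refine hTdgx.trans (Adj.reachable ?_)
      rw [deleteEdges_adj]
      refine ⟨hadj, ?_⟩
      simp only [Set.mem_singleton_iff, Sym2.eq_iff]
      rintro (⟨h, -⟩ | ⟨h, -⟩)
      · exact hxg h
      · exact hxf3 h
    have hxf3SE : s(x, f3) ∉ T.edgeSet := fun hc => hnTxf3 hc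
    -- the swap
    obtain ⟨hT'acy, hT'reach⟩ :=
      DelStep.swap_forest hTacy hTgf3 hxf3 hTdgx (Reachable.refl f3)
    set T' : SimpleGraph (Finset V) := (T.deleteEdges {s(g, f3)}) ⊔ SimpleGraph.edge x f3
      with hT'def
    have hT'le : T' ≤ G' := sup_le ((T.deleteEdges_le _).trans hTle) (DelStep.edge_le hG'xf3)
    have hT'sf : IsSpanningForest G' T' :=
      ⟨hT'le, hT'acy, fun u v => (hT'reach u v).trans (hTreach u v)⟩
    have hT'E : T'.edgeSet = (T.edgeSet \ {s(g, f3)}) ∪ {s(x, f3)} := by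
      rw [hT'def, DelStep.edgeSet_sup_edge hxf3, edgeSet_deleteEdges]
    have hfwT : fweight T' + interWt s(g, f3) = fweight T + interWt s(x, f3) :=
      DelStep.fweight_swap (T.mem_edgeSet.mpr hTgf3) hxf3SE hT'E
    have hwle := hTmax T' hT'sf
    have hinterwt : interWt s(x, f3) = (x ∩ f3).card := rfl
    have hinterwt2 : interWt s(g, f3) = A.card := by
      rw [show interWt s(g, f3) = (g ∩ f3).card from rfl, hgf3A]
    rw [hinterwt, hinterwt2] at hfwT
    have hxf3A : x ∩ f3 = A := by
      refine (Finset.eq_of_subset_of_card_le hAxf3 ?_).symm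
      omega
    rw [hxf3A] at hfwT
    have hT'w : fweight T' = fweight T := by omega
    have hT'max : IsMaxSpanningForest G' T' :=
      ⟨hT'sf, fun S' h => le_of_le_of_eq (hTmax S' h) hT'w.symm⟩
    -- S₀ edges survive
    have hgf3S₀ : s(g, f3) ∉ S₀.edgeSet := fun hc => hf3S (hS₀le (hc : S₀.Adj g f3))
    have hT'cont : S₀.edgeSet ⊆ T'.edgeSet := by
      intro r hr
      rw [hT'E]
      exact Or.inl ⟨hTcont hr, fun hre => hgf3S₀ ((hre : r = _) ▸ hr)⟩
    -- adjacency description of T'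
    have hT'adj : ∀ u v, T'.Adj u v ↔
        (T.Adj u v ∧ s(u, v) ≠ s(g, f3)) ∨ ((u = x ∧ v = f3) ∨ (u = f3 ∧ v = x)) := by
      intro u v
      rw [hT'def, sup_adj, deleteEdges_adj, edge_adj]
      constructor
      · rintro (⟨h1, h2⟩ | ⟨h1, -⟩)
        · exact Or.inl ⟨h1, by simpa using h2⟩
        · exact Or.inr h1
      · rintro (⟨h1, h2⟩ | h1)
        · exact Or.inl ⟨h1, by simpa using h2⟩
        · refine Or.inr ⟨h1, ?_⟩
          rcases h1 with ⟨rfl, rfl⟩ | ⟨rfl, rfl⟩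
          · exact hxf3
          · exact hxf3.symm
    -- counting bookkeeping
    set k := {f | T.Adj g f ∧ g ∩ f = A}.ncard with hkdef
    set m := {f | T.Adj x f ∧ x ∩ f = A}.ncard with hmdef
    have hm1 : m ≤ 1 := by
      have hseteq : {f | T.Adj x f ∧ x ∩ f = A} = {f | FS.Adj x f} := by
        ext f
        simp only [Set.mem_setOf_eq, hFSdef, deleteEdges_adj, hFAadj,
          Set.mem_singleton_iff, Sym2.eq_iff]
        constructor
        · rintro ⟨h1, h2⟩
          exact ⟨⟨h1, h2⟩, by rintro (⟨h, -⟩ | ⟨h, -⟩); exacts [hxg h, hxf3 h]⟩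
        · rintro ⟨⟨h1, h2⟩, -⟩
          exact ⟨h1, h2⟩
      rw [hmdef, hseteq]
      exact hxdeg
    -- the row identities
    have hrow_other : ∀ h0, h0 ≠ g → h0 ≠ x → ∀ A' : Finset V,
        {f | T'.Adj h0 f ∧ h0 ∩ f = A'}.ncard = {f | T.Adj h0 f ∧ h0 ∩ f = A'}.ncard := by
      intro h0 hh0g hh0x A'
      by_cases hh0f3 : h0 = f3
      · rw [hh0f3]
        by_cases hAA : A' = A
        · rw [hAA]
          have hseteq : {f | T'.Adj f3 f ∧ f3 ∩ f = A} =
              ({f | T.Adj f3 f ∧ f3 ∩ f = A} \ {g}) ∪ {x} := by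
            ext f
            simp only [Set.mem_setOf_eq, hT'adj, Set.mem_union, Set.mem_diff,
              Set.mem_singleton_iff, ne_eq, Sym2.eq_iff]
            constructor
            · rintro ⟨(⟨h1, h2⟩ | ⟨h4, -⟩ | ⟨-, h5⟩), h3⟩
              · refine Or.inl ⟨⟨h1, h3⟩, fun hfg => h2 ?_⟩
                rw [hfg]
                exact Or.inr ⟨trivial, rfl⟩
              · exact absurd h4.symm hxf3
              · exact Or.inr h5
            · rintro (⟨⟨h1, h2⟩, h3⟩ | h5)
              · refine ⟨Or.inl ⟨h1, ?_⟩, h2⟩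
                rintro (⟨h4, -⟩ | ⟨-, h4⟩)
                · exact hgf3ne h4.symm
                · exact h3 h4
              · rw [h5]
                exact ⟨Or.inr (Or.inr ⟨trivial, rfl⟩), by rw [Finset.inter_comm]; exact hxf3A⟩
          rw [hseteq]
          refine DelStep.ncard_swap (s := {f | T.Adj f3 f ∧ f3 ∩ f = A}) (Set.toFinite _)
            (show T.Adj f3 g ∧ f3 ∩ g = A from
              ⟨hTgf3.symm, by rw [Finset.inter_comm]; exact hgf3A⟩)
            (fun hc => hnTxf3 (hc : T.Adj f3 x ∧ f3 ∩ x = A).1.symm)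
        · have hseteq : {f | T'.Adj f3 f ∧ f3 ∩ f = A'} = {f | T.Adj f3 f ∧ f3 ∩ f = A'} := by
            ext f
            simp only [Set.mem_setOf_eq, hT'adj, ne_eq, Sym2.eq_iff]
            constructor
            · rintro ⟨(⟨h1, -⟩ | ⟨h4, -⟩ | ⟨-, h5⟩), h3⟩
              · exact ⟨h1, h3⟩
              · exact absurd h4.symm hxf3
              · rw [h5, Finset.inter_comm, hxf3A] at h3
                exact absurd h3.symm hAA
            · rintro ⟨h1, h3⟩
              refine ⟨Or.inl ⟨h1, ?_⟩, h3⟩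
              rintro (⟨h4, -⟩ | ⟨-, h4⟩)
              · exact hgf3ne h4.symm
              · rw [h4, Finset.inter_comm, hgf3A] at h3
                exact hAA h3.symm
          rw [hseteq]
      · have hseteq : {f | T'.Adj h0 f ∧ h0 ∩ f = A'} = {f | T.Adj h0 f ∧ h0 ∩ f = A'} := by
          ext f
          simp only [Set.mem_setOf_eq, hT'adj, ne_eq, Sym2.eq_iff]
          constructor
          · rintro ⟨(⟨h1, -⟩ | ⟨h4, -⟩ | ⟨h4, -⟩), h3⟩
            · exact ⟨h1, h3⟩
            · exact absurd h4 hh0x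
            · exact absurd h4 hh0f3
          · rintro ⟨h1, h3⟩
            refine ⟨Or.inl ⟨h1, ?_⟩, h3⟩
            rintro (⟨h4, -⟩ | ⟨h4, -⟩)
            · exact hh0g h4
            · exact hh0f3 h4
        rw [hseteq]
    have hrow_g : ∀ A' : Finset V, A' ≠ A →
        {f | T'.Adj g f ∧ g ∩ f = A'}.ncard = {f | T.Adj g f ∧ g ∩ f = A'}.ncard := by
      intro A' hAA
      have hseteq : {f | T'.Adj g f ∧ g ∩ f = A'} = {f | T.Adj g f ∧ g ∩ f = A'} := by
        ext f
        simp only [Set.mem_setOf_eq, hT'adj, ne_eq, Sym2.eq_iff]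
        constructor
        · rintro ⟨(⟨h1, -⟩ | ⟨h4, -⟩ | ⟨h4, -⟩), h3⟩
          · exact ⟨h1, h3⟩
          · exact absurd h4.symm hxg
          · exact absurd h4 hgf3ne
        · rintro ⟨h1, h3⟩
          refine ⟨Or.inl ⟨h1, ?_⟩, h3⟩
          rintro (⟨-, h4⟩ | ⟨h4, -⟩)
          · rw [h4, hgf3A] at h3
            exact hAA h3.symm
          · exact hgf3ne h4
      rw [hseteq]
    have hrow_gA : {f | T'.Adj g f ∧ g ∩ f = A}.ncard = k - 1 := by
      have hseteq : {f | T'.Adj g f ∧ g ∩ f = A} = {f | T.Adj g f ∧ g ∩ f = A} \ {f3} := by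
        ext f
        simp only [Set.mem_setOf_eq, hT'adj, Set.mem_diff, Set.mem_singleton_iff, ne_eq, Sym2.eq_iff]
        constructor
        · rintro ⟨(⟨h1, h2⟩ | ⟨h4, -⟩ | ⟨h4, -⟩), h3⟩
          · exact ⟨⟨h1, h3⟩, fun hf => h2 (Or.inl ⟨trivial, hf⟩)⟩
          · exact absurd h4.symm hxg
          · exact absurd h4 hgf3ne
        · rintro ⟨⟨h1, h2⟩, h3⟩
          refine ⟨Or.inl ⟨h1, ?_⟩, h2⟩
          rintro (⟨-, h4⟩ | ⟨h4, -⟩)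
          · exact h3 h4
          · exact hgf3ne h4
      rw [hseteq, Set.ncard_diff_singleton_of_mem hf3mem]
    have hrow_x : ∀ A' : Finset V, A' ≠ A →
        {f | T'.Adj x f ∧ x ∩ f = A'}.ncard = {f | T.Adj x f ∧ x ∩ f = A'}.ncard := by
      intro A' hAA
      have hseteq : {f | T'.Adj x f ∧ x ∩ f = A'} = {f | T.Adj x f ∧ x ∩ f = A'} := by
        ext f
        simp only [Set.mem_setOf_eq, hT'adj, ne_eq, Sym2.eq_iff]
        constructor
        · rintro ⟨(⟨h1, -⟩ | ⟨-, h4⟩ | ⟨h4, -⟩), h3⟩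
          · exact ⟨h1, h3⟩
          · rw [h4, hxf3A] at h3
            exact absurd h3.symm hAA
          · exact absurd h4 hxf3
        · rintro ⟨h1, h3⟩
          refine ⟨Or.inl ⟨h1, ?_⟩, h3⟩
          rintro (⟨h4, -⟩ | ⟨h4, -⟩)
          · exact hxg h4
          · exact hxf3 h4
      rw [hseteq]
    have hrow_xA : {f | T'.Adj x f ∧ x ∩ f = A}.ncard = m + 1 := by
      have hf3notm : f3 ∉ {f | T.Adj x f ∧ x ∩ f = A} := fun hc => hnTxf3 hc.1
      have hseteq : {f | T'.Adj x f ∧ x ∩ f = A} =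
          insert f3 {f | T.Adj x f ∧ x ∩ f = A} := by
        ext f
        simp only [Set.mem_setOf_eq, hT'adj, Set.mem_insert_iff, ne_eq, Sym2.eq_iff]
        constructor
        · rintro ⟨(⟨h1, -⟩ | ⟨-, h4⟩ | ⟨h4, -⟩), h3⟩
          · exact Or.inr ⟨h1, h3⟩
          · exact Or.inl h4
          · exact absurd h4 hxf3
        · rintro (h5 | ⟨h1, h3⟩)
          · rw [h5]
            exact ⟨Or.inr (Or.inl ⟨trivial, rfl⟩), hxf3A⟩
          · refine ⟨Or.inl ⟨h1, ?_⟩, h3⟩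
            rintro (⟨h4, -⟩ | ⟨h4, -⟩)
            · exact hxg h4
            · exact hxf3 h4
      rw [hseteq, Set.ncard_insert_of_notMem hf3notm (Set.toFinite _)]
    -- assemble the potential comparison
    have hAgpow : A ∈ g.powerset := Finset.mem_powerset.mpr hAg
    have hAxpow : A ∈ x.powerset := Finset.mem_powerset.mpr hAx
    have hk3 : 3 ≤ k := by omega
    have hchoose : Nat.choose (k - 1) 2 + (k - 1) = Nat.choose k 2 := by
      obtain ⟨j, hj⟩ : ∃ j, k = j + 1 := ⟨k - 1, by omega⟩
      have hcs : Nat.choose (j + 1) 2 = Nat.choose j 1 + Nat.choose j 2 :=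
        Nat.choose_succ_succ j 1
      rw [hj, Nat.add_sub_cancel, hcs, Nat.choose_one_right]
      omega
    have hchoosex : Nat.choose (m + 1) 2 = Nat.choose m 2 + m := by
      have hcs : Nat.choose (m + 1) 2 = Nat.choose m 1 + Nat.choose m 2 :=
        Nat.choose_succ_succ m 1
      rw [hcs, Nat.choose_one_right]
      omega
    have hrowsum_g : ∑ A' ∈ g.powerset, Nat.choose ({f | T'.Adj g f ∧ g ∩ f = A'}.ncard) 2
        + (k - 1)
        = ∑ A' ∈ g.powerset, Nat.choose ({f | T.Adj g f ∧ g ∩ f = A'}.ncard) 2 := by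
      rw [← Finset.add_sum_erase _ _ hAgpow, ← Finset.add_sum_erase _
        (fun A' => Nat.choose ({f | T.Adj g f ∧ g ∩ f = A'}.ncard) 2) hAgpow]
      have hcong : ∑ A' ∈ g.powerset.erase A,
            Nat.choose ({f | T'.Adj g f ∧ g ∩ f = A'}.ncard) 2
          = ∑ A' ∈ g.powerset.erase A,
            Nat.choose ({f | T.Adj g f ∧ g ∩ f = A'}.ncard) 2 :=
        Finset.sum_congr rfl (fun A' hA' => by rw [hrow_g A' (Finset.mem_erase.mp hA').1])
      rw [hcong, hrow_gA, ← hkdef]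
      omega
    have hrowsum_x : ∑ A' ∈ x.powerset, Nat.choose ({f | T'.Adj x f ∧ x ∩ f = A'}.ncard) 2
        = ∑ A' ∈ x.powerset, Nat.choose ({f | T.Adj x f ∧ x ∩ f = A'}.ncard) 2 + m := by
      rw [← Finset.add_sum_erase _ _ hAxpow, ← Finset.add_sum_erase _
        (fun A' => Nat.choose ({f | T.Adj x f ∧ x ∩ f = A'}.ncard) 2) hAxpow]
      have hcong : ∑ A' ∈ x.powerset.erase A,
            Nat.choose ({f | T'.Adj x f ∧ x ∩ f = A'}.ncard) 2
          = ∑ A' ∈ x.powerset.erase A,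
            Nat.choose ({f | T.Adj x f ∧ x ∩ f = A'}.ncard) 2 :=
        Finset.sum_congr rfl (fun A' hA' => by rw [hrow_x A' (Finset.mem_erase.mp hA').1])
      rw [hcong, hrow_xA, hchoosex, ← hmdef]
      omega
    -- split Ψ over g and x
    have hgx : g ≠ x := Ne.symm hxg
    have hxmem : x ∈ E'.erase g := Finset.mem_erase.mpr ⟨hxg, hxE'⟩
    have hΨsplit : ∀ U : SimpleGraph (Finset V),
        Ψ U = (∑ A' ∈ g.powerset, Nat.choose ({f | U.Adj g f ∧ g ∩ f = A'}.ncard) 2)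
          + ((∑ A' ∈ x.powerset, Nat.choose ({f | U.Adj x f ∧ x ∩ f = A'}.ncard) 2)
          + ∑ h ∈ (E'.erase g).erase x, ∑ A' ∈ h.powerset,
              Nat.choose ({f | U.Adj h f ∧ h ∩ f = A'}.ncard) 2) := by
      intro U
      show (∑ g0 ∈ E', ∑ A' ∈ g0.powerset,
          Nat.choose ({f | U.Adj g0 f ∧ g0 ∩ f = A'}.ncard) 2) = _
      rw [← Finset.add_sum_erase _ _ hgE'mem, ← Finset.add_sum_erase _ _ hxmem]
    have hrest : ∑ h ∈ (E'.erase g).erase x, ∑ A' ∈ h.powerset,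
          Nat.choose ({f | T'.Adj h f ∧ h ∩ f = A'}.ncard) 2
        = ∑ h ∈ (E'.erase g).erase x, ∑ A' ∈ h.powerset,
          Nat.choose ({f | T.Adj h f ∧ h ∩ f = A'}.ncard) 2 := by
      refine Finset.sum_congr rfl (fun h hh => Finset.sum_congr rfl (fun A' _ => ?_))
      have h1 := Finset.mem_erase.mp hh
      have h2 := Finset.mem_erase.mp h1.2
      rw [hrow_other h h2.1 h1.1 A']
    have hΨT' := hΨsplit T'
    have hΨT := hΨsplit T
    have hΨlt : Ψ T' < Ψ T := by
      rw [hΨT', hΨT, hrest, hrowsum_x]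
      omega
    have hT'mem : T' ∈ {U : SimpleGraph (Finset V) |
        IsMaxSpanningForest G' U ∧ S₀.edgeSet ⊆ U.edgeSet} := ⟨hT'max, hT'cont⟩
    have := hTmin T' hT'mem
    omega
  -- Phase C : the symmetric difference bound
  refine ⟨T, ⟨⟨hTle, hTacy, hTreach⟩, hTmax⟩, hstar', ?_⟩
  have hST : S.edgeSet \ T.edgeSet ⊆ S.incidenceSet e := by
    intro r hr
    by_contra hmem
    have hrS₀ : r ∈ S₀.edgeSet := by
      rw [hS₀E]
      exact ⟨hr.1, hmem⟩
    exact hr.2 (hTcont hrS₀)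
  have hTS : T.edgeSet \ S.edgeSet = T.edgeSet \ S₀.edgeSet := by
    ext r
    simp only [Set.mem_diff]
    constructor
    · rintro ⟨h1, h2⟩
      exact ⟨h1, fun hc => h2 (hS₀E ▸ hc).1⟩
    · rintro ⟨h1, h2⟩
      refine ⟨h1, fun hc => h2 ?_⟩
      rw [hS₀E]
      refine ⟨hc, fun hinc => ?_⟩
      exact hG'noe T hTle r h1 hinc.2
  have hTcard : T.edgeSet.ncard ≤ S.edgeSet.ncard := by
    refine DelStep.forest_card_le hTacy _ S hSacy (fun a b hab => ?_) rfl
    exact (hSreach a b).mpr ((hG'le (hTle hab)).reachable)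
  have h1 : (S.edgeSet \ T.edgeSet).ncard ≤ d := by
    rw [← hδd]
    exact Set.ncard_le_ncard hST (Set.toFinite _)
  have h2 : (T.edgeSet \ S.edgeSet).ncard ≤ d := by
    rw [hTS, Set.ncard_diff hTcont (Set.toFinite _), hS₀card]
    omega
  calc ((S.edgeSet \ T.edgeSet) ∪ (T.edgeSet \ S.edgeSet)).ncard
      ≤ (S.edgeSet \ T.edgeSet).ncard + (T.edgeSet \ S.edgeSet).ncard :=
        Set.ncard_union_le _ _
    _ ≤ 2 * d := by omega
end

section
/- Let H be a hypergraph whose set of hyperedges is partitioned into two sets C₁ and C₂. Let e₁ ∈ C₁ and e₂ ∈ C₂ be such that (e₁, e₂) is an edge of wg(H) of maximum weight among all edges of wg(H) with one endpoint in C₁ and the other in C₂, and let A = e₁ ∩ e₂. Then for every hyperedge e₁' ∈ C₁ with e₁ ∩ e₁' = A, the pair (e₁', e₂) is also an edge of wg(H) with one endpoint in C₁ and the other in C₂ of the same maximum weight; in particular |e₁' ∩ e₂| = |A|. -/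
/-!
Lemma 3.1(a) (Bernstein–Goodman): a hypergraph `H` is acyclic iff the weight `w(H)`
equals the weight of a maximum-weight spanning forest of the weighted hyperedge
graph `wg(H)`.

A hypergraph on a finite vertex type `V` is given by its finite set `E` of
hyperedges, each a `Finset V`.
-/

variable {V : Type*} [Fintype V] [DecidableEq V]

/-- If the hyperedges of `H` are partitioned into `C₁` and `C₂` and `(e₁, e₂)` is a
maximum-weight edge of `wg(H)` crossing the partition, with `A = e₁ ∩ e₂`, then for
every `e₁' ∈ C₁` with `e₁ ∩ e₁' = A`, the pair `(e₁', e₂)` is also a crossing edge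
of `wg(H)` of the same maximum weight; in particular `|e₁' ∩ e₂| = |A|`. -/
theorem crossing_edge_replacement (E C₁ C₂ : Finset (Finset V))
    (hpart : C₁ ∪ C₂ = E) (hdisj : Disjoint C₁ C₂)
    (e₁ e₂ : Finset V) (h₁ : e₁ ∈ C₁) (h₂ : e₂ ∈ C₂)
    (hadj : (wg E).Adj e₁ e₂)
    (hmax : ∀ f₁ ∈ C₁, ∀ f₂ ∈ C₂, (wg E).Adj f₁ f₂ → (f₁ ∩ f₂).card ≤ (e₁ ∩ e₂).card)
    (A : Finset V) (hA : A = e₁ ∩ e₂) :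
    ∀ e₁' ∈ C₁, e₁ ∩ e₁' = A →
      (wg E).Adj e₁' e₂ ∧ (e₁' ∩ e₂).card = (e₁ ∩ e₂).card ∧ (e₁' ∩ e₂).card = A.card := by
  intro e₁' h₁' hA'
  have hAsub2 : A ⊆ e₂ := hA ▸ Finset.inter_subset_right
  have hAsub1' : A ⊆ e₁' := hA' ▸ Finset.inter_subset_right
  have hAsub : A ⊆ e₁' ∩ e₂ := Finset.subset_inter hAsub1' hAsub2
  have hAne : A.Nonempty := by rw [hA]; exact hadj.2.2.2
  have hne : e₁' ≠ e₂ := fun h => Finset.disjoint_left.mp hdisj h₁' (h ▸ h₂)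
  have hE1 : e₁' ∈ E := hpart ▸ Finset.mem_union_left _ h₁'
  have hE2 : e₂ ∈ E := hpart ▸ Finset.mem_union_right _ h₂
  have hadj' : (wg E).Adj e₁' e₂ :=
    ⟨hE1, hE2, hne, hAne.mono hAsub⟩
  have hle : (e₁' ∩ e₂).card ≤ (e₁ ∩ e₂).card := hmax _ h₁' _ h₂ hadj'
  have hge : A.card ≤ (e₁' ∩ e₂).card := Finset.card_le_card hAsub
  have heq : (e₁' ∩ e₂).card = (e₁ ∩ e₂).card := le_antisymm hle (hA ▸ hge)
  exact ⟨hadj', heq, heq.trans (hA ▸ rfl)⟩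
end
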